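/- Theorem 1 (TLP objective via pipes): Let C < m be the magazine capacity, T_1,…,T_n ⊆ T the job tool sets with |T_i| ≤ C, |∪T_i| = m, and let M = {(M_1,…,M_n) : T_i ⊆ M_i, |M_i| = C}. Then min{switches(M) : M ∈ M} = Σ_{i=1}^n |T_i| − C − max{|P(M)| : M ∈ M}, where switches(M) = Σ_{i=1}^{n-1}|M_{i+1} \ M_i| and P(M) is the set of pipes of M. -/

import Mathlib

def switches (n : ℕ) (L : ℕ → Finset ℕ) : ℕ :=
  ∑ i ∈ Finset.Icc 1 (n - 1), ((L (i + 1)) \ (L i)).card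

def IsPipe (n : ℕ) (T L : ℕ → Finset ℕ) (s e t : ℕ) : Prop :=
  1 ≤ s ∧ s < e ∧ e ≤ n ∧ t ∈ T s ∧ t ∈ T e ∧
    ∀ i ∈ Finset.Ioo s e, t ∉ T i ∧ t ∈ L i

open Classical in
noncomputable def pipeSet (n : ℕ) (T L : ℕ → Finset ℕ) : Finset ((ℕ × ℕ) × ℕ) :=
  ((Finset.Icc 1 n ×ˢ Finset.Icc 1 n) ×ˢ (Finset.Icc 1 n).biUnion T).filter
    (fun p => IsPipe n T L p.1.1 p.1.2 p.2)

/-- A feasible full-magazine sequence: `T i ⊆ M i`, `|M i| = C`, tools come from the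
overall tool set `⋃ T i`. -/
def Feasible (C n : ℕ) (T M : ℕ → Finset ℕ) : Prop :=
  ∀ i ∈ Finset.Icc 1 n, T i ⊆ M i ∧ (M i).card = C ∧ M i ⊆ (Finset.Icc 1 n).biUnion T

open Classical

section TLP

variable {n C : ℕ} {T : ℕ → Finset ℕ}

private lemma occ_idx (hout : ∀ i, i ∉ Finset.Icc 1 n → T i = ∅) {t i : ℕ}
    (h : t ∈ T i) : i ∈ Finset.Icc 1 n := by
  by_contra hc
  rw [hout i hc] at h
  exact absurd h (Finset.notMem_empty t)

private lemma mk_pipe (hout : ∀ i, i ∉ Finset.Icc 1 n → T i = ∅)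
    (M : ℕ → Finset ℕ) {t e1 e2 : ℕ}
    (h1 : t ∈ T e1) (h2 : t ∈ T e2) (hlt : e1 < e2) (he2 : e2 ≤ n)
    (hpres : ∀ i, e1 < i → i < e2 → t ∈ M i) :
    ∃ s, IsPipe n T M s e2 t := by
  classical
  set s := Nat.findGreatest (fun l => t ∈ T l) (e2 - 1) with hs
  have hip : e1 ≤ e2 - 1 := by omega
  have hsge : e1 ≤ s := Nat.le_findGreatest (P := fun l => t ∈ T l) hip h1
  have hsP : t ∈ T s := Nat.findGreatest_spec (P := fun l => t ∈ T l) hip h1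
  have hs1 : 1 ≤ s := (Finset.mem_Icc.1 (occ_idx hout hsP)).1
  have hslt : s < e2 := lt_of_le_of_lt (Nat.findGreatest_le _) (by omega)
  refine ⟨s, hs1, hslt, he2, hsP, h2, ?_⟩
  intro i hi
  rw [Finset.mem_Ioo] at hi
  constructor
  · intro hti
    exact Nat.findGreatest_is_greatest (P := fun l => t ∈ T l) hi.1 (by omega) hti
  · exact hpres i (lt_of_le_of_lt hsge hi.1) hi.2

noncomputable def entrySet (n : ℕ) (M : ℕ → Finset ℕ) : Finset ((_ : ℕ) × ℕ) :=
  (Finset.Icc 1 (n - 1)).sigma (fun i => M (i + 1) \ M i)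

lemma entrySet_card (M : ℕ → Finset ℕ) : (entrySet n M).card = switches n M :=
  Finset.card_sigma _ _

noncomputable def occSet (n : ℕ) (T : ℕ → Finset ℕ) : Finset ((_ : ℕ) × ℕ) :=
  (Finset.Icc 1 n).sigma (fun i => T i)

lemma occSet_card : (occSet n T).card = ∑ i ∈ Finset.Icc 1 n, (T i).card :=
  Finset.card_sigma _ _

lemma mem_occSet {x : (_ : ℕ) × ℕ} :
    x ∈ occSet n T ↔ x.1 ∈ Finset.Icc 1 n ∧ x.2 ∈ T x.1 := Finset.mem_sigma

def Linked (n : ℕ) (T M : ℕ → Finset ℕ) (x : (_ : ℕ) × ℕ) : Prop :=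
  ∃ s, IsPipe n T M s x.1 x.2

def FromStart (M : ℕ → Finset ℕ) (x : (_ : ℕ) × ℕ) : Prop :=
  ∀ a ∈ Finset.Icc 1 x.1, x.2 ∈ M a

lemma occ_partition (M : ℕ → Finset ℕ) :
    (occSet n T).card
      = ((occSet n T).filter (Linked n T M)).card
        + (((occSet n T).filter (fun x => ¬ Linked n T M x)).filter (FromStart M)).card
        + (((occSet n T).filter (fun x => ¬ Linked n T M x)).filter
            (fun x => ¬ FromStart M x)).card := by
  classical
  rw [add_assoc, Finset.card_filter_add_card_filter_not (p := FromStart M)]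
  exact (Finset.card_filter_add_card_filter_not (p := Linked n T M)).symm

noncomputable def lastOut (M : ℕ → Finset ℕ) (x : (_ : ℕ) × ℕ) : ℕ :=
  Nat.findGreatest (fun l => 1 ≤ l ∧ x.2 ∉ M l) x.1

lemma lastOut_spec {M : ℕ → Finset ℕ} (hF : Feasible C n T M) {x : (_ : ℕ) × ℕ}
    (hxO : x ∈ occSet n T) (hnS : ¬ FromStart M x) :
    1 ≤ lastOut M x ∧ lastOut M x < x.1 ∧ x.2 ∉ M (lastOut M x) ∧
      (∀ a, lastOut M x < a → a ≤ x.1 → x.2 ∈ M a) := by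
  classical
  rw [mem_occSet] at hxO
  rw [FromStart] at hnS
  push_neg at hnS
  obtain ⟨a0, ha0, ha0n⟩ := hnS
  rw [Finset.mem_Icc] at ha0
  have hP : (fun l => 1 ≤ l ∧ x.2 ∉ M l) a0 := ⟨ha0.1, ha0n⟩
  have hge : a0 ≤ lastOut M x :=
    Nat.le_findGreatest (P := fun l => 1 ≤ l ∧ x.2 ∉ M l) ha0.2 hP
  have hspec : 1 ≤ lastOut M x ∧ x.2 ∉ M (lastOut M x) :=
    Nat.findGreatest_spec (P := fun l => 1 ≤ l ∧ x.2 ∉ M l) ha0.2 hP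
  have hle : lastOut M x ≤ x.1 := Nat.findGreatest_le _
  have hin : x.2 ∈ M x.1 := (hF x.1 hxO.1).1 hxO.2
  have hlt : lastOut M x < x.1 := by
    rcases eq_or_lt_of_le hle with h | h
    · exact absurd (h ▸ hspec.2) (not_not_intro hin)
    · exact h
  refine ⟨hspec.1, hlt, hspec.2, ?_⟩
  intro a haa hax
  by_contra hna
  exact absurd (Nat.findGreatest_is_greatest (P := fun l => 1 ≤ l ∧ x.2 ∉ M l)
    haa hax ⟨le_trans hspec.1 (le_of_lt haa), hna⟩) (by simp)

lemma card_linked_le (M : ℕ → Finset ℕ) :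
    ((occSet n T).filter (Linked n T M)).card ≤ (pipeSet n T M).card := by
  classical
  apply Finset.card_le_card_of_injOn
    (fun x => ((if h : Linked n T M x then h.choose else 0, x.1), x.2))
  · intro x hx
    rw [Finset.mem_coe] at hx ⊢
    rw [Finset.mem_filter] at hx
    obtain ⟨hxO, hL⟩ := hx
    rw [mem_occSet] at hxO
    simp only [dif_pos hL]
    have hp := hL.choose_spec
    rw [pipeSet, Finset.mem_filter]
    refine ⟨?_, hp⟩
    rw [Finset.mem_product]
    refine ⟨?_, Finset.mem_biUnion.2 ⟨x.1, hxO.1, hxO.2⟩⟩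
    rw [Finset.mem_product]
    exact ⟨Finset.mem_Icc.2 ⟨hp.1, le_trans (le_of_lt hp.2.1) hp.2.2.1⟩, hxO.1⟩
  · intro a _ b _ hab
    simp only [Prod.mk.injEq] at hab
    exact Sigma.ext hab.1.2 (heq_of_eq hab.2)

lemma card_start_le (hout : ∀ i, i ∉ Finset.Icc 1 n → T i = ∅) (M : ℕ → Finset ℕ) :
    (((occSet n T).filter (fun x => ¬ Linked n T M x)).filter (FromStart M)).card
      ≤ (M 1).card := by
  classical
  apply Finset.card_le_card_of_injOn (fun x => x.2)
  · intro x hx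
    rw [Finset.mem_coe, Finset.mem_filter, Finset.mem_filter, mem_occSet] at hx
    exact hx.2 1 (Finset.mem_Icc.2 ⟨le_refl 1, (Finset.mem_Icc.1 hx.1.1.1).1⟩)
  · intro a ha b hb hab
    rw [Finset.mem_coe, Finset.mem_filter, Finset.mem_filter, mem_occSet] at ha hb
    simp only at hab
    have key : ∀ (u v : (_ : ℕ) × ℕ), u.1 < v.1 → u.2 = v.2 →
        u.1 ∈ Finset.Icc 1 n ∧ u.2 ∈ T u.1 →
        (v.1 ∈ Finset.Icc 1 n ∧ v.2 ∈ T v.1) → FromStart M v → ¬ Linked n T M v → False := by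
      intro u v huv he hu hv hS hL
      apply hL
      refine mk_pipe hout M (he ▸ hu.2) hv.2 huv (Finset.mem_Icc.1 hv.1).2 ?_
      intro i hi1 hi2
      exact hS i (Finset.mem_Icc.2 ⟨le_trans (Finset.mem_Icc.1 hu.1).1 (le_of_lt hi1),
        le_of_lt hi2⟩)
    rcases lt_trichotomy a.1 b.1 with h | h | h
    · exact absurd (key a b h hab ha.1.1 hb.1.1 hb.2 hb.1.2) not_false
    · exact Sigma.ext h (heq_of_eq hab)
    · exact absurd (key b a h hab.symm hb.1.1 ha.1.1 ha.2 ha.1.2) not_false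

lemma card_entry_le (hout : ∀ i, i ∉ Finset.Icc 1 n → T i = ∅) {M : ℕ → Finset ℕ}
    (hF : Feasible C n T M) :
    (((occSet n T).filter (fun x => ¬ Linked n T M x)).filter
        (fun x => ¬ FromStart M x)).card ≤ (entrySet n M).card := by
  classical
  apply Finset.card_le_card_of_injOn (fun x => (⟨lastOut M x, x.2⟩ : (_ : ℕ) × ℕ))
  · intro x hx
    rw [Finset.mem_coe] at hx ⊢
    rw [Finset.mem_filter, Finset.mem_filter, mem_occSet] at hx
    obtain ⟨⟨hxO, hL⟩, hS⟩ := hx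
    obtain ⟨h1, h2, h3, h4⟩ := lastOut_spec hF (mem_occSet.2 hxO) hS
    rw [entrySet, Finset.mem_sigma]
    constructor
    · show lastOut M x ∈ Finset.Icc 1 (n - 1)
      rw [Finset.mem_Icc]
      have := (Finset.mem_Icc.1 hxO.1).2
      omega
    · show x.2 ∈ M (lastOut M x + 1) \ M (lastOut M x)
      rw [Finset.mem_sdiff]
      exact ⟨h4 (lastOut M x + 1) (Nat.lt_succ_self _) h2, h3⟩
  · intro a ha b hb hab
    rw [Finset.mem_coe, Finset.mem_filter, Finset.mem_filter, mem_occSet] at ha hb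
    have hab1 : lastOut M a = lastOut M b := congrArg (fun y => y.1) hab
    have hab2 : a.2 = b.2 := congrArg (fun y => y.2) hab
    have key : ∀ (u v : (_ : ℕ) × ℕ), u.1 < v.1 → u.2 = v.2 → lastOut M u = lastOut M v →
        (u.1 ∈ Finset.Icc 1 n ∧ u.2 ∈ T u.1) → ¬ Linked n T M u → ¬ FromStart M u →
        (v.1 ∈ Finset.Icc 1 n ∧ v.2 ∈ T v.1) → ¬ Linked n T M v → ¬ FromStart M v →
          False := by
      intro u v huv he hl hu hLu hSu hv hLv hSv
      obtain ⟨hu1, hu2, hu3, hu4⟩ := lastOut_spec hF (mem_occSet.2 hu) hSu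
      obtain ⟨hv1, hv2, hv3, hv4⟩ := lastOut_spec hF (mem_occSet.2 hv) hSv
      apply hLv
      refine mk_pipe hout M (he ▸ hu.2) hv.2 huv (Finset.mem_Icc.1 hv.1).2 ?_
      intro i hi1 hi2
      have hgt : lastOut M v < i := by
        rw [← hl]
        exact lt_trans hu2 hi1
      have hm := hv4 i hgt (le_of_lt hi2)
      rw [← he] at hm ⊢
      exact hm
    rcases lt_trichotomy a.1 b.1 with h | h | h
    · exact absurd (key a b h hab2 hab1 ha.1.1 ha.1.2 ha.2 hb.1.1 hb.1.2 hb.2) not_false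
    · exact Sigma.ext h (heq_of_eq hab2)
    · exact absurd (key b a h hab2.symm hab1.symm hb.1.1 hb.1.2 hb.2 ha.1.1 ha.1.2 ha.2)
        not_false


lemma lemA (hn : 1 ≤ n) (hout : ∀ i, i ∉ Finset.Icc 1 n → T i = ∅)
    {M : ℕ → Finset ℕ} (hF : Feasible C n T M) :
    (∑ i ∈ Finset.Icc 1 n, (T i).card) ≤ (pipeSet n T M).card + C + switches n M := by
  have h1 := card_linked_le (n := n) (T := T) M
  have h2 := card_start_le hout M
  have h3 := card_entry_le hout hF
  have hM1 : (M 1).card = C := (hF 1 (Finset.mem_Icc.2 ⟨le_refl 1, hn⟩)).2.1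
  have hpart := occ_partition (T := T) (n := n) M
  rw [← occSet_card, hpart, ← entrySet_card (n := n) M, ← hM1]
  omega

/-- every maximal presence run contains an occurrence -/
def NoFreeRun (n : ℕ) (T M : ℕ → Finset ℕ) : Prop :=
  ∀ t j k, 1 ≤ j → j ≤ k → k ≤ n → (∀ a ∈ Finset.Icc j k, t ∈ M a) →
    (j = 1 ∨ t ∉ M (j - 1)) → (k = n ∨ t ∉ M (k + 1)) →
    ∃ a ∈ Finset.Icc j k, t ∈ T a

noncomputable def runTop (n : ℕ) (M : ℕ → Finset ℕ) (j t : ℕ) : ℕ :=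
  Nat.findGreatest (fun l => j ≤ l ∧ ∀ a ∈ Finset.Icc j l, t ∈ M a) n

lemma runTop_spec {M : ℕ → Finset ℕ} {j t : ℕ} (hjn : j ≤ n) (hjm : t ∈ M j) :
    j ≤ runTop n M j t ∧ runTop n M j t ≤ n ∧
      (∀ a ∈ Finset.Icc j (runTop n M j t), t ∈ M a) ∧
      (runTop n M j t = n ∨ t ∉ M (runTop n M j t + 1)) := by
  classical
  have hPj : (fun l => j ≤ l ∧ ∀ a ∈ Finset.Icc j l, t ∈ M a) j := by
    refine ⟨le_refl j, ?_⟩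
    intro a ha
    rw [Finset.mem_Icc] at ha
    have : a = j := le_antisymm ha.2 ha.1
    rwa [this]
  have hge : j ≤ runTop n M j t :=
    Nat.le_findGreatest (P := fun l => j ≤ l ∧ ∀ a ∈ Finset.Icc j l, t ∈ M a) hjn hPj
  have hspec := Nat.findGreatest_spec
    (P := fun l => j ≤ l ∧ ∀ a ∈ Finset.Icc j l, t ∈ M a) hjn hPj
  have hle : runTop n M j t ≤ n := Nat.findGreatest_le _
  refine ⟨hge, hle, hspec.2, ?_⟩
  rcases eq_or_lt_of_le hle with h | h
  · exact Or.inl h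
  · right
    intro hmem
    have hngr := Nat.findGreatest_is_greatest
      (P := fun l => j ≤ l ∧ ∀ a ∈ Finset.Icc j l, t ∈ M a)
      (Nat.lt_succ_self _) h
    apply hngr
    refine ⟨le_trans hge (Nat.le_succ _), ?_⟩
    intro a ha
    rw [Finset.mem_Icc] at ha
    rcases eq_or_lt_of_le ha.2 with h2 | h2
    · rwa [h2]
    · exact hspec.2 a (Finset.mem_Icc.2 ⟨ha.1, by omega⟩)

lemma card_pipe_le (M : ℕ → Finset ℕ) :
    (pipeSet n T M).card ≤ ((occSet n T).filter (Linked n T M)).card := by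
  classical
  apply Finset.card_le_card_of_injOn (fun p => (⟨p.1.2, p.2⟩ : (_ : ℕ) × ℕ))
  · intro p hp
    rw [Finset.mem_coe] at hp ⊢
    rw [pipeSet, Finset.mem_filter] at hp
    obtain ⟨hmem, hpipe⟩ := hp
    rw [Finset.mem_filter, mem_occSet]
    refine ⟨⟨?_, hpipe.2.2.2.2.1⟩, ⟨p.1.1, hpipe⟩⟩
    exact Finset.mem_Icc.2 ⟨le_trans hpipe.1 (le_of_lt hpipe.2.1), hpipe.2.2.1⟩
  · intro p hp q hq hpq
    rw [Finset.mem_coe, pipeSet, Finset.mem_filter] at hp hq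
    have he : p.1.2 = q.1.2 := congrArg (fun y => y.1) hpq
    have ht : p.2 = q.2 := congrArg (fun y => y.2) hpq
    have hs : p.1.1 = q.1.1 := by
      by_contra hne
      rcases lt_or_gt_of_ne hne with h | h
      · have := (hp.2.2.2.2.2.2 q.1.1 (Finset.mem_Ioo.2 ⟨h, he ▸ hq.2.2.1⟩)).1
        exact this (ht ▸ hq.2.2.2.2.1)
      · have := (hq.2.2.2.2.2.2 p.1.1 (Finset.mem_Ioo.2 ⟨h, he ▸ hp.2.2.1⟩)).1
        exact this (ht ▸ hp.2.2.2.2.1)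
    have h1 : p.1 = q.1 := Prod.ext hs he
    exact Prod.ext h1 ht

lemma card_M1_le {M : ℕ → Finset ℕ} (hn : 1 ≤ n) (hgood : NoFreeRun n T M) :
    (M 1).card ≤
      (((occSet n T).filter (fun x => ¬ Linked n T M x)).filter (FromStart M)).card := by
  classical
  set f : ℕ → (_ : ℕ) × ℕ := fun t =>
    if h : ∃ a, 1 ≤ a ∧ a ≤ runTop n M 1 t ∧ t ∈ T a
      then (⟨Nat.find h, t⟩ : (_ : ℕ) × ℕ) else ⟨0, t⟩ with hf
  have hsnd : ∀ t, (f t).2 = t := by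
    intro t
    rw [hf]
    dsimp only
    split <;> rfl
  apply Finset.card_le_card_of_injOn f
  · intro t ht
    obtain ⟨hge, hle, hpres, hright⟩ := runTop_spec (n := n) hn ht
    have hex : ∃ a, 1 ≤ a ∧ a ≤ runTop n M 1 t ∧ t ∈ T a := by
      obtain ⟨a, ha, hta⟩ := hgood t 1 (runTop n M 1 t) le_rfl hge hle hpres
        (Or.inl rfl) hright
      rw [Finset.mem_Icc] at ha
      exact ⟨a, ha.1, ha.2, hta⟩
    rw [hf]
    simp only [dif_pos hex]
    obtain ⟨hf1, hf2, hf3⟩ := Nat.find_spec hex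
    rw [Finset.mem_coe, Finset.mem_filter, Finset.mem_filter, mem_occSet]
    refine ⟨⟨⟨Finset.mem_Icc.2 ⟨hf1, le_trans hf2 hle⟩, hf3⟩, ?_⟩, ?_⟩
    · rintro ⟨s, hip⟩
      exact Nat.find_min hex hip.2.1
        ⟨hip.1, le_trans (le_of_lt hip.2.1) hf2, hip.2.2.2.1⟩
    · intro a ha
      rw [Finset.mem_Icc] at ha
      exact hpres a (Finset.mem_Icc.2 ⟨ha.1, le_trans ha.2 hf2⟩)
  · intro a _ b _ hab
    have := congrArg (fun y => y.2) hab
    simp only [hsnd] at this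
    exact this

lemma card_ES_le (hout : ∀ i, i ∉ Finset.Icc 1 n → T i = ∅) {M : ℕ → Finset ℕ}
    (hgood : NoFreeRun n T M) (hF : Feasible C n T M) :
    (entrySet n M).card ≤
      (((occSet n T).filter (fun x => ¬ Linked n T M x)).filter
        (fun x => ¬ FromStart M x)).card := by
  classical
  set f : ((_ : ℕ) × ℕ) → (_ : ℕ) × ℕ := fun x =>
    if h : ∃ a, x.1 + 1 ≤ a ∧ a ≤ runTop n M (x.1 + 1) x.2 ∧ x.2 ∈ T a
      then (⟨Nat.find h, x.2⟩ : (_ : ℕ) × ℕ) else ⟨0, x.2⟩ with hf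
  have hsnd : ∀ x, (f x).2 = x.2 := by
    intro x
    rw [hf]
    dsimp only
    split <;> rfl
  have hfst : ∀ (x : (_ : ℕ) × ℕ), x ∈ entrySet n M →
      ∃ (h : ∃ a, x.1 + 1 ≤ a ∧ a ≤ runTop n M (x.1 + 1) x.2 ∧ x.2 ∈ T a),
        f x = ⟨Nat.find h, x.2⟩ ∧ x.1 + 1 ≤ Nat.find h ∧
        (∀ b, x.1 + 1 ≤ b → b ≤ Nat.find h → x.2 ∈ M b) := by
    intro x hx
    rw [entrySet, Finset.mem_sigma, Finset.mem_Icc, Finset.mem_sdiff] at hx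
    obtain ⟨⟨hx1, hx2⟩, hxin, hxout⟩ := hx
    have hj1 : x.1 + 1 ≤ n := by omega
    obtain ⟨hge, hle, hpres, hright⟩ := runTop_spec (n := n) hj1 hxin
    have hex : ∃ a, x.1 + 1 ≤ a ∧ a ≤ runTop n M (x.1 + 1) x.2 ∧ x.2 ∈ T a := by
      obtain ⟨a, ha, hta⟩ := hgood x.2 (x.1 + 1) (runTop n M (x.1 + 1) x.2)
        (by omega) hge hle hpres (Or.inr (by simpa using hxout)) hright
      rw [Finset.mem_Icc] at ha
      exact ⟨a, ha.1, ha.2, hta⟩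
    refine ⟨hex, by rw [hf]; simp only [dif_pos hex], (Nat.find_spec hex).1, ?_⟩
    intro b hb1 hb2
    exact hpres b (Finset.mem_Icc.2 ⟨hb1, le_trans hb2 (Nat.find_spec hex).2.1⟩)
  apply Finset.card_le_card_of_injOn f
  · intro x hx
    obtain ⟨hex, hfx, hfind1, hpresb⟩ := hfst x hx
    rw [Finset.mem_coe, entrySet, Finset.mem_sigma, Finset.mem_Icc, Finset.mem_sdiff] at hx
    obtain ⟨⟨hx1, hx2⟩, hxin, hxout⟩ := hx
    obtain ⟨hg1, hg2, hg3⟩ := Nat.find_spec hex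
    have hred : (⟨Nat.find hex, x.snd⟩ : (_ : ℕ) × ℕ).fst = Nat.find hex := rfl
    rw [hfx, Finset.mem_coe, Finset.mem_filter, Finset.mem_filter, mem_occSet]
    dsimp only
    have hrle : runTop n M (x.1 + 1) x.2 ≤ n := Nat.findGreatest_le _
    refine ⟨⟨⟨Finset.mem_Icc.2 ⟨by omega, le_trans hg2 hrle⟩, hg3⟩, ?_⟩, ?_⟩
    · rintro ⟨s, hip⟩
      have hs1 := hip.1
      have hslt : s < Nat.find hex := hip.2.1
      rcases le_or_gt (x.1 + 1) s with hcase | hcase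
      · exact Nat.find_min hex hslt ⟨hcase, le_trans (le_of_lt hslt) hg2, hip.2.2.2.1⟩
      · rcases eq_or_lt_of_le (Nat.lt_succ_iff.1 hcase) with he | he
        · apply hxout
          rw [← he]
          exact (hF s (occ_idx hout hip.2.2.2.1)).1 hip.2.2.2.1
        · apply hxout
          exact (hip.2.2.2.2.2 x.1 (Finset.mem_Ioo.2 ⟨he, by omega⟩)).2
    · intro hFS
      apply hxout
      exact hFS x.1 (Finset.mem_Icc.2 ⟨by omega, by omega⟩)
  · intro a ha b hb hab
    rw [Finset.mem_coe] at ha hb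
    obtain ⟨hexa, hfa, ha1, hpa⟩ := hfst a ha
    obtain ⟨hexb, hfb, hb1, hpb⟩ := hfst b hb
    rw [hfa, hfb] at hab
    have hts : a.2 = b.2 := congrArg (fun y => y.2) hab
    have hes : Nat.find hexa = Nat.find hexb := congrArg (fun y => y.1) hab
    rcases lt_trichotomy a.1 b.1 with h | h | h
    · exfalso
      rw [entrySet, Finset.mem_sigma, Finset.mem_sdiff] at hb
      apply hb.2.2
      rw [← hts]
      exact hpa b.1 (by omega) (by rw [hes]; omega)
    · exact Sigma.ext h (heq_of_eq hts)
    · exfalso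
      rw [entrySet, Finset.mem_sigma, Finset.mem_sdiff] at ha
      apply ha.2.2
      rw [hts]
      exact hpb a.1 (by omega) (by rw [← hes]; omega)


lemma lemB1 (hn : 1 ≤ n) (hout : ∀ i, i ∉ Finset.Icc 1 n → T i = ∅)
    {M : ℕ → Finset ℕ} (hgood : NoFreeRun n T M) (hF : Feasible C n T M) :
    (pipeSet n T M).card + C + switches n M ≤ ∑ i ∈ Finset.Icc 1 n, (T i).card := by
  have h1 := card_pipe_le (n := n) (T := T) M
  have h2 := card_M1_le hn hgood
  have h3 := card_ES_le hout hgood hF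
  have hM1 : (M 1).card = C := (hF 1 (Finset.mem_Icc.2 ⟨le_refl 1, hn⟩)).2.1
  have hpart := occ_partition (T := T) (n := n) M
  rw [← occSet_card, hpart, ← entrySet_card (n := n) M, ← hM1]
  omega

def subst (M : ℕ → Finset ℕ) (t u lo hi : ℕ) : ℕ → Finset ℕ :=
  fun a => if lo ≤ a ∧ a ≤ hi then insert u ((M a).erase t) else M a

lemma subst_eq_of_not {M : ℕ → Finset ℕ} {t u lo hi a : ℕ} (h : a < lo ∨ hi < a) :
    subst M t u lo hi a = M a := by
  rw [subst]
  exact if_neg (by omega)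

lemma subst_eq_of_mem {M : ℕ → Finset ℕ} {t u lo hi a : ℕ} (h1 : lo ≤ a) (h2 : a ≤ hi) :
    subst M t u lo hi a = insert u ((M a).erase t) := by
  rw [subst]
  exact if_pos ⟨h1, h2⟩

lemma subst_feasible {M : ℕ → Finset ℕ} {t u lo hi : ℕ} (hF : Feasible C n T M)
    (hu : u ∈ (Finset.Icc 1 n).biUnion T)
    (hfacts : ∀ a, lo ≤ a → a ≤ hi → t ∈ M a ∧ u ∉ M a ∧ t ∉ T a) :
    Feasible C n T (subst M t u lo hi) := by
  intro i hi'
  obtain ⟨hT, hcard, hsub⟩ := hF i hi'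
  by_cases hin : lo ≤ i ∧ i ≤ hi
  · rw [subst_eq_of_mem hin.1 hin.2]
    obtain ⟨ht, hu', hnt⟩ := hfacts i hin.1 hin.2
    have hCpos : 0 < C := hcard ▸ Finset.card_pos.2 ⟨t, ht⟩
    refine ⟨?_, ?_, ?_⟩
    · intro x hx
      rcases eq_or_ne x t with rfl | hne
      · exact absurd hx hnt
      · exact Finset.mem_insert_of_mem (Finset.mem_erase.2 ⟨hne, hT hx⟩)
    · rw [Finset.card_insert_of_notMem (fun hc => hu' (Finset.mem_of_mem_erase hc)),
        Finset.card_erase_of_mem ht, hcard]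
      omega
    · intro x hx
      rcases Finset.mem_insert.1 hx with rfl | hx'
      · exact hu
      · exact hsub (Finset.mem_of_mem_erase hx')
  · rw [subst, if_neg hin]
    exact ⟨hT, hcard, hsub⟩

lemma subst_pipes {M : ℕ → Finset ℕ} {t u lo hi : ℕ}
    (hfree : ∀ s e, IsPipe n T M s e t → ∀ i ∈ Finset.Ioo s e, i < lo ∨ hi < i) :
    pipeSet n T M ⊆ pipeSet n T (subst M t u lo hi) := by
  intro p hp
  rw [pipeSet, Finset.mem_filter] at hp ⊢
  obtain ⟨hmem, h1, h2, h3, h4, h5, h6⟩ := hp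
  refine ⟨hmem, h1, h2, h3, h4, h5, ?_⟩
  intro i hi'
  refine ⟨(h6 i hi').1, ?_⟩
  have hm := (h6 i hi').2
  by_cases hin : lo ≤ i ∧ i ≤ hi
  · rw [subst_eq_of_mem hin.1 hin.2]
    rcases eq_or_ne p.2 t with heq | hne
    · rcases hfree p.1.1 p.1.2 (heq ▸ ⟨h1, h2, h3, h4, h5, h6⟩) i hi' with h | h <;> omega
    · exact Finset.mem_insert_of_mem (Finset.mem_erase.2 ⟨hne, hm⟩)
  · rw [subst, if_neg hin]
    exact hm

lemma subst_step_le {M : ℕ → Finset ℕ} {t u lo hi : ℕ}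
    (hlo : 1 ≤ lo) (hlh : lo ≤ hi) (hhi : hi ≤ n)
    (hfacts : ∀ a, lo ≤ a → a ≤ hi → t ∈ M a ∧ u ∉ M a)
    (H3 : 2 ≤ lo → u ∈ M (lo - 1))
    (H4 : hi < n → (t ∉ M (hi + 1) ∨ u ∈ M (hi + 1))) :
    ∀ i ∈ Finset.Icc 1 (n - 1),
      ((subst M t u lo hi (i + 1)) \ (subst M t u lo hi i)).card
        ≤ ((M (i + 1)) \ (M i)).card := by
  intro i hi'
  rw [Finset.mem_Icc] at hi'
  by_cases c1 : i + 1 < lo ∨ hi < i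
  · rw [subst_eq_of_not (by omega), subst_eq_of_not (by omega)]
  push_neg at c1
  by_cases c2 : lo ≤ i ∧ i + 1 ≤ hi
  · -- both inside
    obtain ⟨ht1, hu1⟩ := hfacts i c2.1 (by omega)
    obtain ⟨ht2, hu2⟩ := hfacts (i + 1) (by omega) c2.2
    rw [subst_eq_of_mem (by omega) c2.2, subst_eq_of_mem c2.1 (by omega)]
    apply le_of_eq
    congr 1
    ext x
    simp only [Finset.mem_sdiff, Finset.mem_insert, Finset.mem_erase]
    constructor
    · rintro ⟨hA, hB⟩
      rcases hA with rfl | ⟨hxt, hxm⟩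
      · exact absurd (Or.inl rfl) hB
      · refine ⟨hxm, fun hc => hB (Or.inr ⟨hxt, hc⟩)⟩
    · rintro ⟨hA, hB⟩
      have hxu : x ≠ u := fun hc => hu2 (hc ▸ hA)
      have hxt : x ≠ t := fun hc => hB (hc ▸ ht1)
      exact ⟨Or.inr ⟨hxt, hA⟩, fun hc => by
        rcases hc with rfl | ⟨_, hc2⟩
        · exact hxu rfl
        · exact hB hc2⟩
  · -- boundary cases
    by_cases c3 : i + 1 = lo
    · -- left boundary
      have hlo2 : 2 ≤ lo := by omega
      have huin := H3 hlo2
      have hloi : lo - 1 = i := by omega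
      rw [hloi] at huin
      rw [subst_eq_of_not (a := i) (by omega),
        subst_eq_of_mem (a := i + 1) (by omega) (by omega)]
      apply Finset.card_le_card
      intro x hx
      rw [Finset.mem_sdiff, Finset.mem_insert, Finset.mem_erase] at hx
      rcases hx.1 with rfl | ⟨hxt, hxm⟩
      · exact absurd huin hx.2
      · exact Finset.mem_sdiff.2 ⟨hxm, hx.2⟩
    · -- right boundary : i = hi
      have hieq : i = hi := by omega
      subst hieq
      obtain ⟨hti, hui⟩ := hfacts i (by omega) le_rfl
      have hin1 : i < n := by omega
      rw [subst_eq_of_not (a := i + 1) (by omega), subst_eq_of_mem (by omega) le_rfl]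
      rcases H4 hin1 with hcase | hcase
      · apply Finset.card_le_card
        intro x hx
        rw [Finset.mem_sdiff, Finset.mem_insert, Finset.mem_erase] at hx
        push_neg at hx
        refine Finset.mem_sdiff.2 ⟨hx.1, ?_⟩
        intro hc
        have hxt : x ≠ t := fun h => hcase (h ▸ hx.1)
        exact (hx.2.2 hxt) hc
      · calc ((M (i + 1)) \ insert u ((M i).erase t)).card
            ≤ (insert t (((M (i + 1)) \ (M i)).erase u)).card := by
              apply Finset.card_le_card
              intro x hx
              rw [Finset.mem_sdiff, Finset.mem_insert, Finset.mem_erase] at hx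
              push_neg at hx
              rcases eq_or_ne x t with rfl | hxt
              · exact Finset.mem_insert_self _ _
              · refine Finset.mem_insert_of_mem (Finset.mem_erase.2
                  ⟨hx.2.1, Finset.mem_sdiff.2 ⟨hx.1, hx.2.2 hxt⟩⟩)
          _ ≤ (((M (i + 1)) \ (M i)).erase u).card + 1 := Finset.card_insert_le _ _
          _ ≤ ((M (i + 1)) \ (M i)).card := by
              rw [Finset.card_erase_of_mem (Finset.mem_sdiff.2 ⟨hcase, hui⟩)]
              have : 0 < ((M (i + 1)) \ (M i)).card :=
                Finset.card_pos.2 ⟨u, Finset.mem_sdiff.2 ⟨hcase, hui⟩⟩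
              omega

lemma exchange (hout : ∀ i, i ∉ Finset.Icc 1 n → T i = ∅)
    {M : ℕ → Finset ℕ} (hF : Feasible C n T M) (hbad : ¬ NoFreeRun n T M) :
    ∃ M', Feasible C n T M' ∧ pipeSet n T M ⊆ pipeSet n T M' ∧
      switches n M' < switches n M := by
  classical
  rw [NoFreeRun] at hbad
  push_neg at hbad
  obtain ⟨t, j, k, hj1, hjk, hkn, hpres, hjb, hkb, htf⟩ := hbad
  rcases eq_or_lt_of_le hj1 with hj1' | hj2
  · -- Case II : j = 1
    have hj1'' : j = 1 := hj1'.symm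
    subst hj1''
    -- t has an occurrence somewhere, so k < n
    have hkn' : k < n := by
      rcases eq_or_lt_of_le hkn with h | h
      · exfalso
        have ht1 : t ∈ M 1 := hpres 1 (Finset.mem_Icc.2 ⟨le_rfl, hjk⟩)
        have hU : t ∈ (Finset.Icc 1 n).biUnion T :=
          (hF 1 (Finset.mem_Icc.2 ⟨le_rfl, by omega⟩)).2.2 ht1
        obtain ⟨a, haI, hta⟩ := Finset.mem_biUnion.1 hU
        rw [Finset.mem_Icc] at haI
        exact htf a (Finset.mem_Icc.2 ⟨haI.1, by omega⟩) hta
      · exact h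
    have htk1 : t ∉ M (k + 1) := by
      rcases hkb with h | h
      · omega
      · exact h
    have htk : t ∈ M k := hpres k (Finset.mem_Icc.2 ⟨hjk, le_rfl⟩)
    have hkmem : k ∈ Finset.Icc 1 n := Finset.mem_Icc.2 ⟨hjk, hkn⟩
    have hk1mem : k + 1 ∈ Finset.Icc 1 n := Finset.mem_Icc.2 ⟨by omega, by omega⟩
    have hne : (M (k + 1) \ M k).Nonempty := by
      rw [← Finset.card_pos, Finset.card_sdiff_comm
        (by rw [(hF _ hk1mem).2.1, (hF _ hkmem).2.1])]
      exact Finset.card_pos.2 ⟨t, Finset.mem_sdiff.2 ⟨htk, htk1⟩⟩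
    obtain ⟨u, hu⟩ := hne
    rw [Finset.mem_sdiff] at hu
    have hexJ : ∃ l, 1 ≤ l ∧ ∀ a ∈ Finset.Icc l k, u ∉ M a := by
      refine ⟨k, hjk, fun a ha => ?_⟩
      rw [Finset.mem_Icc] at ha
      have : a = k := by omega
      rw [this]
      exact hu.2
    set J := Nat.find hexJ with hJ
    obtain ⟨hJ1, hJspec⟩ := Nat.find_spec hexJ
    have hJle : J ≤ k := Nat.find_le ⟨hjk, fun a ha => by
      rw [Finset.mem_Icc] at ha
      have : a = k := by omega
      rw [this]
      exact hu.2⟩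
    have hH3 : 2 ≤ J → u ∈ M (J - 1) := by
      intro h2
      have hmin := Nat.find_min hexJ (m := J - 1) (by omega)
      push_neg at hmin
      obtain ⟨a, haI, hua⟩ := hmin (by omega)
      rw [Finset.mem_Icc] at haI
      rcases eq_or_lt_of_le haI.1 with h | h
      · rwa [h]
      · exact absurd hua (hJspec a (Finset.mem_Icc.2 ⟨by omega, haI.2⟩))
    have hfacts : ∀ a, J ≤ a → a ≤ k → t ∈ M a ∧ u ∉ M a ∧ t ∉ T a := by
      intro a h1 h2
      have haik : a ∈ Finset.Icc 1 k := Finset.mem_Icc.2 ⟨by omega, h2⟩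
      exact ⟨hpres a haik, hJspec a (Finset.mem_Icc.2 ⟨h1, h2⟩), htf a haik⟩
    have hfree : ∀ s e, IsPipe n T M s e t → ∀ i ∈ Finset.Ioo s e, i < J ∨ k < i := by
      intro s e hp i hi
      rw [Finset.mem_Ioo] at hi
      by_contra hc
      push_neg at hc
      exact htf s (Finset.mem_Icc.2 ⟨hp.1, by omega⟩) hp.2.2.2.1
    have hfeas := subst_feasible hF ((hF _ hk1mem).2.2 hu.1) hfacts
    have hpipes := subst_pipes (u := u) hfree
    refine ⟨subst M t u J k, hfeas, hpipes, ?_⟩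
    rw [switches, switches]
    apply Finset.sum_lt_sum
    · exact subst_step_le hJ1 hJle hkn
        (fun a h1 h2 => ⟨(hfacts a h1 h2).1, (hfacts a h1 h2).2.1⟩)
        hH3 (fun _ => Or.inl htk1)
    · refine ⟨k, Finset.mem_Icc.2 ⟨hjk, by omega⟩, ?_⟩
      rw [subst_eq_of_not (a := k + 1) (by omega), subst_eq_of_mem hJle le_rfl]
      have hset : M (k + 1) \ insert u ((M k).erase t) = (M (k + 1) \ M k).erase u := by
        ext x
        rw [Finset.mem_sdiff, Finset.mem_insert, Finset.mem_erase, Finset.mem_erase,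
          Finset.mem_sdiff]
        constructor
        · rintro ⟨hA, hB⟩
          push_neg at hB
          refine ⟨hB.1, hA, ?_⟩
          intro hc
          have hxt : x ≠ t := fun h => htk1 (h ▸ hA)
          exact (hB.2 hxt) hc
        · rintro ⟨hxu, hA, hB⟩
          refine ⟨hA, ?_⟩
          rintro (rfl | ⟨hxt, hxm⟩)
          · exact hxu rfl
          · exact hB hxm
      rw [hset, Finset.card_erase_of_mem (Finset.mem_sdiff.2 ⟨hu.1, hu.2⟩)]
      have : 0 < (M (k + 1) \ M k).card :=
        Finset.card_pos.2 ⟨u, Finset.mem_sdiff.2 ⟨hu.1, hu.2⟩⟩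
      omega
  · -- Case I : 2 ≤ j
    have htj : t ∈ M j := hpres j (Finset.mem_Icc.2 ⟨le_rfl, hjk⟩)
    have htj1 : t ∉ M (j - 1) := by
      rcases hjb with h | h
      · omega
      · exact h
    have hjmem : j ∈ Finset.Icc 1 n := Finset.mem_Icc.2 ⟨hj1, by omega⟩
    have hj1mem : j - 1 ∈ Finset.Icc 1 n := Finset.mem_Icc.2 ⟨by omega, by omega⟩
    have hne : (M (j - 1) \ M j).Nonempty := by
      rw [← Finset.card_pos, Finset.card_sdiff_comm
        (by rw [(hF _ hj1mem).2.1, (hF _ hjmem).2.1])]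
      exact Finset.card_pos.2 ⟨t, Finset.mem_sdiff.2 ⟨htj, htj1⟩⟩
    obtain ⟨u, hu⟩ := hne
    rw [Finset.mem_sdiff] at hu
    set K := Nat.findGreatest (fun l => j ≤ l ∧ ∀ a ∈ Finset.Icc j l, u ∉ M a) k with hK
    have hPj : (fun l => j ≤ l ∧ ∀ a ∈ Finset.Icc j l, u ∉ M a) j := by
      refine ⟨le_rfl, fun a ha => ?_⟩
      rw [Finset.mem_Icc] at ha
      have : a = j := by omega
      rw [this]
      exact hu.2
    have hKge : j ≤ K :=
      Nat.le_findGreatest (P := fun l => j ≤ l ∧ ∀ a ∈ Finset.Icc j l, u ∉ M a) hjk hPj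
    have hKspec := Nat.findGreatest_spec
      (P := fun l => j ≤ l ∧ ∀ a ∈ Finset.Icc j l, u ∉ M a) hjk hPj
    have hKle : K ≤ k := Nat.findGreatest_le _
    have hKb : K = k ∨ u ∈ M (K + 1) := by
      rcases eq_or_lt_of_le hKle with h | h
      · exact Or.inl h
      · right
        by_contra hc
        apply Nat.findGreatest_is_greatest
          (P := fun l => j ≤ l ∧ ∀ a ∈ Finset.Icc j l, u ∉ M a)
          (Nat.lt_succ_self K) (by omega)
        refine ⟨by omega, fun a ha => ?_⟩
        rw [Finset.mem_Icc] at ha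
        rcases eq_or_lt_of_le ha.2 with h2 | h2
        · rwa [h2]
        · exact hKspec.2 a (Finset.mem_Icc.2 ⟨ha.1, by omega⟩)
    have hfacts : ∀ a, j ≤ a → a ≤ K → t ∈ M a ∧ u ∉ M a ∧ t ∉ T a := by
      intro a h1 h2
      have haik : a ∈ Finset.Icc j k := Finset.mem_Icc.2 ⟨h1, le_trans h2 hKle⟩
      exact ⟨hpres a haik, hKspec.2 a (Finset.mem_Icc.2 ⟨h1, h2⟩), htf a haik⟩
    have hfree : ∀ s e, IsPipe n T M s e t → ∀ i ∈ Finset.Ioo s e, i < j ∨ K < i := by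
      intro s e hp i hi
      rw [Finset.mem_Ioo] at hi
      by_contra hc
      push_neg at hc
      have hte := hp.2.2.2.2.1
      have hen := hp.2.2.1
      rcases le_or_gt e k with hek | hek
      · exact htf e (Finset.mem_Icc.2 ⟨by omega, hek⟩) hte
      · have hkn' : k < n := by omega
        have htk1 : t ∉ M (k + 1) := by
          rcases hkb with h | h
          · omega
          · exact h
        rcases eq_or_lt_of_le (by omega : k + 1 ≤ e) with h | h
        · exact htk1 (h ▸ ((hF e (occ_idx hout hte)).1 hte))
        · exact htk1 (hp.2.2.2.2.2 (k + 1) (Finset.mem_Ioo.2 ⟨by omega, h⟩)).2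
    have hfeas := subst_feasible hF ((hF _ hj1mem).2.2 hu.1) hfacts
    have hpipes := subst_pipes (u := u) hfree
    refine ⟨subst M t u j K, hfeas, hpipes, ?_⟩
    rw [switches, switches]
    apply Finset.sum_lt_sum
    · refine subst_step_le hj1 hKge (by omega)
        (fun a h1 h2 => ⟨(hfacts a h1 h2).1, (hfacts a h1 h2).2.1⟩)
        (fun _ => hu.1) ?_
      intro hKn
      rcases hKb with h | h
      · left
        rcases hkb with h2 | h2
        · omega
        · rwa [h]
      · exact Or.inr h
    · refine ⟨j - 1, Finset.mem_Icc.2 ⟨by omega, by omega⟩, ?_⟩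
      have hj11 : j - 1 + 1 = j := by omega
      rw [hj11, subst_eq_of_not (a := j - 1) (by omega), subst_eq_of_mem le_rfl hKge]
      have hset : insert u ((M j).erase t) \ M (j - 1) = (M j \ M (j - 1)).erase t := by
        ext x
        rw [Finset.mem_sdiff, Finset.mem_insert, Finset.mem_erase, Finset.mem_erase,
          Finset.mem_sdiff]
        constructor
        · rintro ⟨hA, hB⟩
          rcases hA with rfl | ⟨hxt, hxm⟩
          · exact absurd hu.1 hB
          · exact ⟨hxt, hxm, hB⟩
        · rintro ⟨hxt, hxm, hB⟩
          exact ⟨Or.inr ⟨hxt, hxm⟩, hB⟩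
      rw [hset, Finset.card_erase_of_mem (Finset.mem_sdiff.2 ⟨htj, htj1⟩)]
      have : 0 < (M j \ M (j - 1)).card :=
        Finset.card_pos.2 ⟨t, Finset.mem_sdiff.2 ⟨htj, htj1⟩⟩
      omega

lemma lemB (hn : 1 ≤ n) (hout : ∀ i, i ∉ Finset.Icc 1 n → T i = ∅) :
    ∀ (s : ℕ) (M : ℕ → Finset ℕ), Feasible C n T M → switches n M ≤ s →
    ∃ M', Feasible C n T M' ∧ (pipeSet n T M).card ≤ (pipeSet n T M').card ∧
      switches n M' + C + (pipeSet n T M').card ≤ ∑ i ∈ Finset.Icc 1 n, (T i).card := by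
  intro s
  induction s using Nat.strong_induction_on with
  | _ s ih =>
    intro M hF hsw
    by_cases hgood : NoFreeRun n T M
    · refine ⟨M, hF, le_rfl, ?_⟩
      have := lemB1 hn hout hgood hF
      omega
    · obtain ⟨M', hF', hsub, hlt⟩ := exchange hout hF hgood
      have hcle := Finset.card_le_card hsub
      obtain ⟨M'', h1, h2, h3⟩ := ih (switches n M') (by omega) M' hF' le_rfl
      exact ⟨M'', h1, le_trans hcle h2, h3⟩

lemma feasible_exists (hout : ∀ i, i ∉ Finset.Icc 1 n → T i = ∅)
    (hTc : ∀ i ∈ Finset.Icc 1 n, (T i).card ≤ C)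
    (hm : C ≤ ((Finset.Icc 1 n).biUnion T).card) :
    ∃ M, Feasible C n T M := by
  classical
  have h : ∀ i, ∃ S : Finset ℕ, T i ⊆ S ∧ S ⊆ (Finset.Icc 1 n).biUnion T ∧ S.card = C := by
    intro i
    by_cases hi : i ∈ Finset.Icc 1 n
    · exact Finset.exists_subsuperset_card_eq
        (Finset.subset_biUnion_of_mem (fun j => T j) hi) (hTc i hi) hm
    · rw [hout i hi]
      have := Finset.exists_subsuperset_card_eq
        (Finset.empty_subset ((Finset.Icc 1 n).biUnion T)) (by simp) hm
      simpa using this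
  refine ⟨fun i => (h i).choose, fun i hi => ?_⟩
  obtain ⟨h1, h2, h3⟩ := (h i).choose_spec
  exact ⟨h1, h3, h2⟩

end TLP

/-- Theorem 1: the minimum number of tool switches over all feasible full-magazine
sequences equals `∑ |T i| − C − max{|P(M)|}`. -/
theorem tlp_objective_via_pipes (n C : ℕ) (T : ℕ → Finset ℕ) (hn : 1 ≤ n)
    (hout : ∀ i, i ∉ Finset.Icc 1 n → T i = ∅)
    (hTc : ∀ i ∈ Finset.Icc 1 n, (T i).card ≤ C)
    (hm : C < ((Finset.Icc 1 n).biUnion T).card) :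
    sInf {k | ∃ M, Feasible C n T M ∧ switches n M = k}
      = (∑ i ∈ Finset.Icc 1 n, (T i).card) - C
        - sSup {k | ∃ M, Feasible C n T M ∧ (pipeSet n T M).card = k} := by
  classical
  obtain ⟨M0, hM0⟩ := feasible_exists hout hTc (le_of_lt hm)
  set Ssw := {k | ∃ M, Feasible C n T M ∧ switches n M = k} with hSsw
  set Spi := {k | ∃ M, Feasible C n T M ∧ (pipeSet n T M).card = k} with hSpi
  have hne1 : Ssw.Nonempty := ⟨switches n M0, M0, hM0, rfl⟩
  have hne2 : Spi.Nonempty := ⟨(pipeSet n T M0).card, M0, hM0, rfl⟩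
  have hbdd : BddAbove Spi := by
    refine ⟨(((Finset.Icc 1 n ×ˢ Finset.Icc 1 n) ×ˢ (Finset.Icc 1 n).biUnion T)).card, ?_⟩
    rintro x ⟨M, hF, rfl⟩
    exact Finset.card_filter_le _ _
  obtain ⟨Mstar, hFstar, hstar⟩ := Nat.sSup_mem hne2 hbdd
  obtain ⟨M'', hF'', hcard'', hle''⟩ :=
    lemB hn hout (switches n Mstar) Mstar hFstar le_rfl
  have hcards : (pipeSet n T M'').card = sSup Spi :=
    le_antisymm (le_csSup hbdd ⟨M'', hF'', rfl⟩) (hstar ▸ hcard'')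
  have hinf_le : sInf Ssw ≤ switches n M'' := Nat.sInf_le ⟨M'', hF'', rfl⟩
  obtain ⟨Mmin, hFmin, hmin⟩ := Nat.sInf_mem hne1
  have hlow := lemA hn hout hFmin
  have hpile : (pipeSet n T Mmin).card ≤ sSup Spi := le_csSup hbdd ⟨Mmin, hFmin, rfl⟩
  omega
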